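/- Let Σ ⊇ {0,1} be a finite alphabet, let S ⊆ Σ^ω, and suppose there exists α ∈ S such that for every δ > 0 there is a sequence β ∈ S that differs from α in infinitely many positions and satisfies d_H(α, β) ≤ δ. Then no compact decoder-only Transformer over Σ eventually learns every sequence in S. -/

import Mathlib

open Finset Filter

open Classical in
/-- Relative Hamming distance between two finite sequences. -/
noncomputable def relHamming {A : Type*} {n : ℕ} (α β : Fin n → A) : ℝ :=
  ((Finset.univ.filter (fun i => α i ≠ β i)).card : ℝ) / n

/-- Relative Hamming distance between two infinite sequences (1-indexed:
position `n ≥ 1` of the sequence `α : ℕ → A` is `α n`). -/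
noncomputable def relHammingInf {A : Type*} (α β : ℕ → A) : ℝ :=
  Filter.liminf
    (fun n : ℕ => relHamming (fun i : Fin n => α (i.val + 1)) (fun i : Fin n => β (i.val + 1)))
    Filter.atTop

/-- A `d`-dimensional decoder-only attention layer. -/
structure AttentionLayer (d : ℕ) where
  p : ℕ → ℕ → (Fin d → ℝ)
  val : (Fin d → ℝ) → (Fin d → ℝ)
  w : (Fin d → ℝ) → (Fin d → ℝ) → (Fin d → ℝ) → ℝ
  F : (Fin d → ℝ) → (Fin d → ℝ) → (Fin d → ℝ)
  w_pos : ∀ x y z, 0 < w x y z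
  val_cont : Continuous val
  w_cont : Continuous fun t : (Fin d → ℝ) × (Fin d → ℝ) × (Fin d → ℝ) => w t.1 t.2.1 t.2.2
  F_cont : Continuous fun t : (Fin d → ℝ) × (Fin d → ℝ) => F t.1 t.2

/-- A positional encoding is compact if its range is contained in a compact set. -/
def AttentionLayer.CompactPE {d : ℕ} (L : AttentionLayer d) : Prop :=
  ∃ K : Set (Fin d → ℝ), IsCompact K ∧ ∀ i j : ℕ, L.p i j ∈ K

/-- The `j`-th attention vector computed by the layer on input `x`. -/
noncomputable def AttentionLayer.attn {d : ℕ} (L : AttentionLayer d) {n : ℕ}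
    (x : Fin n → (Fin d → ℝ)) (j : Fin n) : Fin d → ℝ :=
  (∑ i ∈ Finset.Iic j, L.w (x i) (x j) (L.p i.val j.val))⁻¹ •
    ∑ i ∈ Finset.Iic j, L.w (x i) (x j) (L.p i.val j.val) • L.val (x i)

/-- The output sequence of the layer on input `x`. -/
noncomputable def AttentionLayer.apply {d : ℕ} (L : AttentionLayer d) {n : ℕ}
    (x : Fin n → (Fin d → ℝ)) : Fin n → (Fin d → ℝ) :=
  fun j => L.F (L.attn x j) (x j)

/-- `sim(x, x̂)`: the minimal `δ ≥ 0` such that `‖x_i − x̂_i‖ ≤ δ` for at least `(1−δ)n`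
indices `i`. -/
noncomputable def simDist {d n : ℕ} (x y : Fin n → (Fin d → ℝ)) : ℝ :=
  sInf {δ : ℝ | 0 ≤ δ ∧
    (1 - δ) * n ≤ ((Finset.univ.filter (fun i => ‖x i - y i‖ ≤ δ)).card : ℝ)}

/-- Sequential application of a list of attention layers. -/
noncomputable def applyLayers {d : ℕ} (Ls : List (AttentionLayer d)) {n : ℕ}
    (x : Fin n → (Fin d → ℝ)) : Fin n → (Fin d → ℝ) :=
  Ls.foldl (fun v L => L.apply v) x

/-- A decoder-only Transformer over a finite alphabet `A`. -/
structure Transformer (A : Type*) [Fintype A] (d : ℕ) where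
  embed : A → ℕ → (Fin d → ℝ)
  layers : List (AttentionLayer d)
  proj : (Fin d → ℝ) → (A → ℝ)
  proj_cont : Continuous proj
  proj_nonneg : ∀ y a, 0 ≤ proj y a
  proj_sum : ∀ y, ∑ a, proj y a = 1

/-- The output probability distribution (as a vector in `ℝ^A`) of the Transformer on a
nonempty input sequence. -/
noncomputable def Transformer.eval {A : Type*} [Fintype A] {d : ℕ} (T : Transformer A d)
    {n : ℕ} (α : Fin (n + 1) → A) : A → ℝ :=
  T.proj (applyLayers T.layers (fun j => T.embed (α j) j.val) (Fin.last n))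

/-- A Transformer is compact if its input embedding has range in a compact set and all of
its layers have compact positional encoding. -/
def Transformer.IsCompactT {A : Type*} [Fintype A] {d : ℕ} (T : Transformer A d) : Prop :=
  (∃ K : Set (Fin d → ℝ), IsCompact K ∧ ∀ (a : A) (i : ℕ), T.embed a i ∈ K) ∧
  ∀ L ∈ T.layers, L.CompactPE

/-- `T` eventually learns the infinite sequence `α` (1-indexed: position `n ≥ 1` is `α n`). -/
def EventuallyLearns {A : Type*} [Fintype A] {d : ℕ} (T : Transformer A d) (α : ℕ → A) :
    Prop :=
  ∃ ε : ℝ, 0 < ε ∧ ∃ n₀ : ℕ, ∀ n ≥ n₀, ∀ σ : A, σ ≠ α (n + 2) →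
    T.eval (fun i : Fin (n + 1) => α (i.val + 1)) σ + ε ≤
      T.eval (fun i : Fin (n + 1) => α (i.val + 1)) (α (n + 2))



section helpers

lemma uc_on {X Y : Type*} [PseudoMetricSpace X] [PseudoMetricSpace Y] {s : Set X}
    (hs : IsCompact s) {f : X → Y} (hf : Continuous f) :
    ∀ ε > 0, ∃ δ > 0, ∀ x ∈ s, ∀ y ∈ s, dist x y ≤ δ → dist (f x) (f y) ≤ ε :=
  (Metric.uniformContinuousOn_iff_le).1
    (hs.uniformContinuousOn_of_continuous hf.continuousOn)

lemma avg_norm_le {d : ℕ} {ι : Type*} (s : Finset ι) (hs : s.Nonempty)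
    (w : ι → ℝ) (v : ι → Fin d → ℝ) (hw : ∀ i ∈ s, 0 < w i)
    {M : ℝ} (hv : ∀ i ∈ s, ‖v i‖ ≤ M) :
    ‖(∑ i ∈ s, w i)⁻¹ • ∑ i ∈ s, w i • v i‖ ≤ M := by
  have hW : 0 < ∑ i ∈ s, w i := Finset.sum_pos hw hs
  have h1 : ‖∑ i ∈ s, w i • v i‖ ≤ (∑ i ∈ s, w i) * M := by
    calc ‖∑ i ∈ s, w i • v i‖ ≤ ∑ i ∈ s, ‖w i • v i‖ := norm_sum_le _ _
    _ ≤ ∑ i ∈ s, w i * M := by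
        refine Finset.sum_le_sum fun i hi => ?_
        rw [norm_smul, Real.norm_eq_abs, abs_of_pos (hw i hi)]
        exact mul_le_mul_of_nonneg_left (hv i hi) (hw i hi).le
    _ = (∑ i ∈ s, w i) * M := by rw [Finset.sum_mul]
  rw [norm_smul, Real.norm_eq_abs, abs_of_pos (inv_pos.2 hW), inv_mul_le_iff₀ hW]
  calc ‖∑ i ∈ s, w i • v i‖ ≤ (∑ i ∈ s, w i) * M := h1
  _ = (∑ i ∈ s, w i) * M := rfl

end helpers


set_option maxHeartbeats 1000000 in
lemma avg_diff {d : ℕ} {ι : Type*} [DecidableEq ι] (s : Finset ι) (hs : s.Nonempty)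
    (w w' : ι → ℝ) (v v' : ι → Fin d → ℝ)
    {wmin wmax M εw εv θ : ℝ}
    (hwmin : 0 < wmin) (hM : 0 ≤ M) (hεw : 0 ≤ εw) (hεv : 0 ≤ εv) (hθ : 0 ≤ θ)
    (hw1 : ∀ i ∈ s, wmin ≤ w i) (hw2 : ∀ i ∈ s, w i ≤ wmax)
    (hw1' : ∀ i ∈ s, wmin ≤ w' i) (hw2' : ∀ i ∈ s, w' i ≤ wmax)
    (hv : ∀ i ∈ s, ‖v i‖ ≤ M) (hv' : ∀ i ∈ s, ‖v' i‖ ≤ M)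
    (B : Finset ι)
    (hgw : ∀ i ∈ s, i ∉ B → |w i - w' i| ≤ εw)
    (hgv : ∀ i ∈ s, i ∉ B → ‖v i - v' i‖ ≤ εv)
    (hB : (B.card : ℝ) ≤ θ * s.card) :
    ‖(∑ i ∈ s, w i)⁻¹ • ∑ i ∈ s, w i • v i -
      (∑ i ∈ s, w' i)⁻¹ • ∑ i ∈ s, w' i • v' i‖ ≤
      εv + (2 * M / wmin) * (εw + 2 * θ * wmax) := by
  set W := ∑ i ∈ s, w i with hWdef
  set W' := ∑ i ∈ s, w' i with hW'def
  set S1 := ∑ i ∈ s, w i • v i with hS1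
  set S2 := ∑ i ∈ s, w i • v' i with hS2
  set S3 := ∑ i ∈ s, w' i • v' i with hS3
  set c := (s.card : ℝ) with hc
  have hc1 : (1 : ℝ) ≤ c := by
    have h : (1:ℕ) ≤ s.card := Finset.card_pos.2 hs
    show (1:ℝ) ≤ (s.card : ℝ)
    exact_mod_cast h
  have hc0 : 0 < c := lt_of_lt_of_le one_pos hc1
  have hwpos : ∀ i ∈ s, 0 < w i := fun i hi => lt_of_lt_of_le hwmin (hw1 i hi)
  have hwpos' : ∀ i ∈ s, 0 < w' i := fun i hi => lt_of_lt_of_le hwmin (hw1' i hi)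
  have hwmax : 0 < wmax := by
    obtain ⟨i, hi⟩ := hs
    exact lt_of_lt_of_le (hwpos i hi) (hw2 i hi)
  have hcW : c * wmin ≤ W := by
    have := Finset.card_nsmul_le_sum s w wmin hw1
    rwa [nsmul_eq_mul] at this
  have hcW' : c * wmin ≤ W' := by
    have := Finset.card_nsmul_le_sum s w' wmin hw1'
    rwa [nsmul_eq_mul] at this
  have hWpos : 0 < W := lt_of_lt_of_le (by positivity) hcW
  have hW'pos : 0 < W' := lt_of_lt_of_le (by positivity) hcW'
  -- sum of |w i - w' i|
  have habs : ∀ i ∈ s, |w i - w' i| ≤ wmax := by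
    intro i hi
    rw [abs_sub_le_iff]
    constructor
    · linarith [hw2 i hi, hw1' i hi]
    · linarith [hw2' i hi, hw1 i hi]
  have hite : ∀ (C : ℝ), 0 ≤ C →
      (∑ i ∈ s, (if i ∈ B then C else 0)) ≤ C * B.card := by
    intro C hC
    rw [Finset.sum_ite_mem]
    calc (∑ _i ∈ s ∩ B, C) = (s ∩ B).card * C := by
          rw [Finset.sum_const, nsmul_eq_mul]
    _ ≤ B.card * C := by
        have : (s ∩ B).card ≤ B.card := Finset.card_le_card (Finset.inter_subset_right)
        exact mul_le_mul_of_nonneg_right (by exact_mod_cast this) hC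
    _ = C * B.card := mul_comm _ _
  have hsumabs : ∑ i ∈ s, |w i - w' i| ≤ εw * c + wmax * B.card := by
    calc ∑ i ∈ s, |w i - w' i| ≤ ∑ i ∈ s, (εw + if i ∈ B then wmax else 0) := by
          refine Finset.sum_le_sum fun i hi => ?_
          by_cases hiB : i ∈ B
          · simp only [hiB, if_true]; linarith [habs i hi]
          · simp only [hiB, if_false]; linarith [hgw i hi hiB]
    _ = εw * c + ∑ i ∈ s, (if i ∈ B then wmax else 0) := by
        rw [Finset.sum_add_distrib, Finset.sum_const, nsmul_eq_mul, mul_comm]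
    _ ≤ εw * c + wmax * B.card := by linarith [hite wmax hwmax.le]
  have hWW' : |W - W'| ≤ εw * c + wmax * B.card := by
    calc |W - W'| = |∑ i ∈ s, (w i - w' i)| := by rw [Finset.sum_sub_distrib]
    _ ≤ ∑ i ∈ s, |w i - w' i| := Finset.abs_sum_le_sum_abs _ _
    _ ≤ _ := hsumabs
  -- term bounds
  have hT1 : ‖S1 - S2‖ ≤ W * εv + B.card * (wmax * (2 * M)) := by
    calc ‖S1 - S2‖ = ‖∑ i ∈ s, w i • (v i - v' i)‖ := by
          rw [hS1, hS2, ← Finset.sum_sub_distrib]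
          simp [smul_sub]
    _ ≤ ∑ i ∈ s, ‖w i • (v i - v' i)‖ := norm_sum_le _ _
    _ ≤ ∑ i ∈ s, (w i * εv + if i ∈ B then wmax * (2 * M) else 0) := by
        refine Finset.sum_le_sum fun i hi => ?_
        rw [norm_smul, Real.norm_eq_abs, abs_of_pos (hwpos i hi)]
        by_cases hiB : i ∈ B
        · simp only [hiB, if_true]
          have h2M : ‖v i - v' i‖ ≤ 2 * M := by
            calc ‖v i - v' i‖ ≤ ‖v i‖ + ‖v' i‖ := norm_sub_le _ _
            _ ≤ 2 * M := by linarith [hv i hi, hv' i hi]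
          have : w i * ‖v i - v' i‖ ≤ wmax * (2 * M) :=
            mul_le_mul (hw2 i hi) h2M (norm_nonneg _) hwmax.le
          nlinarith [mul_nonneg (hwpos i hi).le hεv]
        · simp only [hiB, if_false, add_zero]
          exact mul_le_mul_of_nonneg_left (hgv i hi hiB) (hwpos i hi).le
    _ ≤ W * εv + B.card * (wmax * (2 * M)) := by
        rw [Finset.sum_add_distrib, ← Finset.sum_mul]
        have := hite (wmax * (2 * M)) (by positivity)
        have h := this
        rw [hWdef]
        nlinarith [this]
  have hT2 : ‖S2 - S3‖ ≤ (εw * c + wmax * B.card) * M := by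
    calc ‖S2 - S3‖ = ‖∑ i ∈ s, (w i - w' i) • v' i‖ := by
          rw [hS2, hS3, ← Finset.sum_sub_distrib]
          simp [sub_smul]
    _ ≤ ∑ i ∈ s, ‖(w i - w' i) • v' i‖ := norm_sum_le _ _
    _ ≤ ∑ i ∈ s, |w i - w' i| * M := by
        refine Finset.sum_le_sum fun i hi => ?_
        rw [norm_smul, Real.norm_eq_abs]
        exact mul_le_mul_of_nonneg_left (hv' i hi) (abs_nonneg _)
    _ = (∑ i ∈ s, |w i - w' i|) * M := by rw [Finset.sum_mul]
    _ ≤ (εw * c + wmax * B.card) * M := mul_le_mul_of_nonneg_right hsumabs hM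
  have hT3 : ‖S3‖ ≤ W' * M := by
    calc ‖S3‖ ≤ ∑ i ∈ s, ‖w' i • v' i‖ := norm_sum_le _ _
    _ ≤ ∑ i ∈ s, w' i * M := by
        refine Finset.sum_le_sum fun i hi => ?_
        rw [norm_smul, Real.norm_eq_abs, abs_of_pos (hwpos' i hi)]
        exact mul_le_mul_of_nonneg_left (hv' i hi) (hwpos' i hi).le
    _ = W' * M := by rw [Finset.sum_mul]
  -- decomposition
  have key : W⁻¹ • S1 - W'⁻¹ • S3 =
      W⁻¹ • (S1 - S2) + W⁻¹ • (S2 - S3) + (W⁻¹ - W'⁻¹) • S3 := by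
    rw [smul_sub, smul_sub, sub_smul]; abel
  rw [key]
  have hinv : |W⁻¹ - W'⁻¹| = |W - W'| * (W⁻¹ * W'⁻¹) := by
    have h : W⁻¹ - W'⁻¹ = (W' - W) * (W⁻¹ * W'⁻¹) := by
      field_simp
    rw [h, abs_mul, abs_sub_comm W' W, abs_of_pos (by positivity : (0:ℝ) < W⁻¹ * W'⁻¹)]
  have hbound : ‖W⁻¹ • (S1 - S2) + W⁻¹ • (S2 - S3) + (W⁻¹ - W'⁻¹) • S3‖ ≤
      W⁻¹ * ‖S1 - S2‖ + W⁻¹ * ‖S2 - S3‖ + |W - W'| * (W⁻¹ * W'⁻¹) * ‖S3‖ := by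
    calc ‖W⁻¹ • (S1 - S2) + W⁻¹ • (S2 - S3) + (W⁻¹ - W'⁻¹) • S3‖
        ≤ ‖W⁻¹ • (S1 - S2)‖ + ‖W⁻¹ • (S2 - S3)‖ + ‖(W⁻¹ - W'⁻¹) • S3‖ :=
          norm_add₃_le
    _ = W⁻¹ * ‖S1 - S2‖ + W⁻¹ * ‖S2 - S3‖ + |W⁻¹ - W'⁻¹| * ‖S3‖ := by
        rw [norm_smul, norm_smul, norm_smul, Real.norm_eq_abs, Real.norm_eq_abs,
          abs_of_pos (inv_pos.2 hWpos)]
    _ = _ := by rw [hinv]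
  -- atoms
  have A1 : W⁻¹ * (B.card : ℝ) ≤ θ / wmin := by
    rw [inv_mul_le_iff₀ hWpos]
    have h1 : c * wmin * (θ / wmin) = c * θ := by field_simp
    have h2 : c * wmin * (θ / wmin) ≤ W * (θ / wmin) :=
      mul_le_mul_of_nonneg_right hcW (by positivity)
    calc (B.card : ℝ) ≤ θ * c := hB
    _ = c * wmin * (θ / wmin) := by rw [h1]; ring
    _ ≤ W * (θ / wmin) := h2
  have A2 : W⁻¹ * c ≤ 1 / wmin := by
    rw [inv_mul_le_iff₀ hWpos]
    have h1 : c * wmin * (1 / wmin) = c := by field_simp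
    calc c = c * wmin * (1 / wmin) := by rw [h1]
    _ ≤ W * (1 / wmin) := mul_le_mul_of_nonneg_right hcW (by positivity)
  have hBc0 : (0:ℝ) ≤ B.card := Nat.cast_nonneg _
  -- final arithmetic
  have F1 : W⁻¹ * ‖S1 - S2‖ ≤ εv + (wmax * (2 * M)) * (θ / wmin) := by
    have h0 := mul_le_mul_of_nonneg_left hT1 (inv_pos.2 hWpos).le
    have e1 : W⁻¹ * (W * εv + (B.card:ℝ) * (wmax * (2 * M)))
        = εv + (wmax * (2 * M)) * (W⁻¹ * B.card) := by
      field_simp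
    rw [e1] at h0
    have h4 : (wmax * (2 * M)) * (W⁻¹ * B.card) ≤ (wmax * (2 * M)) * (θ / wmin) :=
      mul_le_mul_of_nonneg_left A1 (by positivity)
    linarith
  have F2 : W⁻¹ * ‖S2 - S3‖ ≤ M * (εw * (1/wmin) + wmax * (θ/wmin)) := by
    have h0 := mul_le_mul_of_nonneg_left hT2 (inv_pos.2 hWpos).le
    have e1 : W⁻¹ * ((εw * c + wmax * (B.card:ℝ)) * M)
        = M * (εw * (W⁻¹ * c) + wmax * (W⁻¹ * B.card)) := by ring
    rw [e1] at h0
    have h4 : εw * (W⁻¹ * c) ≤ εw * (1/wmin) := mul_le_mul_of_nonneg_left A2 hεw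
    have h5 : wmax * (W⁻¹ * B.card) ≤ wmax * (θ/wmin) :=
      mul_le_mul_of_nonneg_left A1 hwmax.le
    have h6 : M * (εw * (W⁻¹ * c) + wmax * (W⁻¹ * B.card))
        ≤ M * (εw * (1/wmin) + wmax * (θ/wmin)) :=
      mul_le_mul_of_nonneg_left (by linarith) hM
    linarith
  have F3 : |W - W'| * (W⁻¹ * W'⁻¹) * ‖S3‖ ≤ M * (εw * (1/wmin) + wmax * (θ/wmin)) := by
    have h1 : |W - W'| * (W⁻¹ * W'⁻¹) * ‖S3‖ ≤ |W - W'| * (W⁻¹ * W'⁻¹) * (W' * M) :=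
      mul_le_mul_of_nonneg_left hT3 (by positivity)
    have h2 : |W - W'| * (W⁻¹ * W'⁻¹) * (W' * M) = (W⁻¹ * |W - W'|) * M := by
      field_simp
    have h4 : W⁻¹ * |W - W'| ≤ W⁻¹ * (εw * c + wmax * B.card) :=
      mul_le_mul_of_nonneg_left hWW' (inv_pos.2 hWpos).le
    have h5 : W⁻¹ * (εw * c + wmax * B.card)
        = εw * (W⁻¹ * c) + wmax * (W⁻¹ * B.card) := by ring
    have h6 : εw * (W⁻¹ * c) ≤ εw * (1/wmin) := mul_le_mul_of_nonneg_left A2 hεw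
    have h7 : wmax * (W⁻¹ * B.card) ≤ wmax * (θ/wmin) :=
      mul_le_mul_of_nonneg_left A1 hwmax.le
    have h8 : W⁻¹ * |W - W'| ≤ εw * (1/wmin) + wmax * (θ/wmin) := by
      rw [h5] at h4; linarith
    calc |W - W'| * (W⁻¹ * W'⁻¹) * ‖S3‖ ≤ (W⁻¹ * |W - W'|) * M := by rw [← h2]; exact h1
    _ ≤ (εw * (1/wmin) + wmax * (θ/wmin)) * M := mul_le_mul_of_nonneg_right h8 hM
    _ = M * (εw * (1/wmin) + wmax * (θ/wmin)) := mul_comm _ _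
  have final : εv + (wmax * (2 * M)) * (θ / wmin)
      + M * (εw * (1/wmin) + wmax * (θ/wmin)) + M * (εw * (1/wmin) + wmax * (θ/wmin))
      = εv + (2 * M / wmin) * (εw + 2 * θ * wmax) := by
    field_simp
    ring
  calc ‖W⁻¹ • (S1 - S2) + W⁻¹ • (S2 - S3) + (W⁻¹ - W'⁻¹) • S3‖
      ≤ W⁻¹ * ‖S1 - S2‖ + W⁻¹ * ‖S2 - S3‖ + |W - W'| * (W⁻¹ * W'⁻¹) * ‖S3‖ := hbound
  _ ≤ (εv + (wmax * (2 * M)) * (θ / wmin))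
      + M * (εw * (1/wmin) + wmax * (θ/wmin)) + M * (εw * (1/wmin) + wmax * (θ/wmin)) := by
      linarith
  _ = εv + (2 * M / wmin) * (εw + 2 * θ * wmax) := by rw [← final]

set_option maxHeartbeats 1000000 in
lemma layer_est {d : ℕ} (L : AttentionLayer d) (hL : L.CompactPE) {R : ℝ} (hR : 0 ≤ R) :
    ∃ R' : ℝ, 0 ≤ R' ∧
      (∀ (n : ℕ) (x : Fin n → (Fin d → ℝ)), (∀ i, ‖x i‖ ≤ R) → ∀ j, ‖L.apply x j‖ ≤ R') ∧
      (∀ ε > 0, ∃ δ > 0, ∀ (n : ℕ) (x y : Fin n → (Fin d → ℝ)),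
        (∀ i, ‖x i‖ ≤ R) → (∀ i, ‖y i‖ ≤ R) → ∀ j : Fin n,
        ‖x j - y j‖ ≤ δ →
        (((Finset.Iic j).filter (fun i => ¬ ‖x i - y i‖ ≤ δ)).card : ℝ) ≤ δ * ((j.val : ℝ) + 1) →
        ‖L.apply x j - L.apply y j‖ ≤ ε) := by
  classical
  obtain ⟨Kp, hKpc, hKp⟩ := hL
  obtain ⟨r, hr⟩ := hKpc.isBounded.subset_closedBall 0
  set Rp : ℝ := max r 0 with hRp
  have hRp0 : 0 ≤ Rp := le_max_right _ _
  have hmemballR : ∀ (ρ : ℝ) (z : Fin d → ℝ), ‖z‖ ≤ ρ →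
      z ∈ Metric.closedBall (0 : Fin d → ℝ) ρ := by
    intro ρ z hz; rwa [Metric.mem_closedBall, dist_zero_right]
  have hpmem : ∀ i j : ℕ, L.p i j ∈ Metric.closedBall (0 : Fin d → ℝ) Rp := by
    intro i j
    have := hr (hKp i j)
    rw [Metric.mem_closedBall] at this ⊢
    exact le_trans this (le_max_left _ _)
  obtain ⟨C, hC⟩ := (isCompact_closedBall (0 : Fin d → ℝ) R).exists_bound_of_continuousOn
    L.val_cont.continuousOn
  set M1 : ℝ := max C 0 + 1 with hM1
  have hM10 : 0 < M1 := by positivity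
  have hval : ∀ z : Fin d → ℝ, ‖z‖ ≤ R → ‖L.val z‖ ≤ M1 := by
    intro z hz
    have := hC z (hmemballR R z hz)
    have h2 : C ≤ max C 0 := le_max_left _ _
    rw [hM1]; linarith
  set s3 : Set ((Fin d → ℝ) × ((Fin d → ℝ) × (Fin d → ℝ))) :=
    Metric.closedBall 0 R ×ˢ (Metric.closedBall 0 R ×ˢ Metric.closedBall 0 Rp) with hs3
  have hs3c : IsCompact s3 := (isCompact_closedBall _ _).prod
    ((isCompact_closedBall _ _).prod (isCompact_closedBall _ _))
  have hs3ne : s3.Nonempty := by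
    refine ⟨(0, 0, 0), ⟨?_, ?_, ?_⟩⟩ <;> simp [Metric.mem_closedBall, hR, hRp0]
  obtain ⟨t0, ht0, hmin⟩ := hs3c.exists_isMinOn hs3ne L.w_cont.continuousOn
  obtain ⟨t1, ht1, hmax⟩ := hs3c.exists_isMaxOn hs3ne L.w_cont.continuousOn
  set wmin : ℝ := L.w t0.1 t0.2.1 t0.2.2 with hwmind
  set wmax : ℝ := L.w t1.1 t1.2.1 t1.2.2 with hwmaxd
  have hwmin0 : 0 < wmin := L.w_pos _ _ _
  have hwmm : ∀ t ∈ s3, wmin ≤ L.w t.1 t.2.1 t.2.2 ∧ L.w t.1 t.2.1 t.2.2 ≤ wmax :=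
    fun t ht => ⟨isMinOn_iff.1 hmin t ht, isMaxOn_iff.1 hmax t ht⟩
  have hwmax0 : 0 < wmax := lt_of_lt_of_le hwmin0 (hwmm t0 ht0).2
  have htriple : ∀ (a b : Fin d → ℝ) (i j : ℕ), ‖a‖ ≤ R → ‖b‖ ≤ R →
      ((a, b, L.p i j) : (Fin d → ℝ) × ((Fin d → ℝ) × (Fin d → ℝ))) ∈ s3 := by
    intro a b i j ha hb
    exact ⟨hmemballR R a ha, hmemballR R b hb, hpmem i j⟩
  have hwb : ∀ (a b : Fin d → ℝ) (i j : ℕ), ‖a‖ ≤ R → ‖b‖ ≤ R →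
      wmin ≤ L.w a b (L.p i j) ∧ L.w a b (L.p i j) ≤ wmax := by
    intro a b i j ha hb
    exact hwmm _ (htriple a b i j ha hb)
  have hattn : ∀ (n : ℕ) (x : Fin n → (Fin d → ℝ)), (∀ i, ‖x i‖ ≤ R) →
      ∀ j, ‖L.attn x j‖ ≤ M1 := by
    intro n x hx j
    have hne : (Finset.Iic j).Nonempty := ⟨j, Finset.mem_Iic.2 le_rfl⟩
    exact avg_norm_le _ hne _ _ (fun i _ => L.w_pos _ _ _) (fun i _ => hval _ (hx i))
  set ball2 : Set ((Fin d → ℝ) × (Fin d → ℝ)) :=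
    Metric.closedBall 0 M1 ×ˢ Metric.closedBall 0 R with hball2
  have hball2c : IsCompact ball2 := (isCompact_closedBall _ _).prod (isCompact_closedBall _ _)
  obtain ⟨CF, hCF⟩ := hball2c.exists_bound_of_continuousOn L.F_cont.continuousOn
  refine ⟨max CF 0, le_max_right _ _, ?_, ?_⟩
  · intro n x hx j
    have h1 : ((L.attn x j, x j) : (Fin d → ℝ) × (Fin d → ℝ)) ∈ ball2 :=
      ⟨hmemballR M1 _ (hattn n x hx j), hmemballR R _ (hx j)⟩
    exact le_trans (hCF _ h1) (le_max_left _ _)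
  · intro ε hε
    obtain ⟨δF, hδF0, hδF⟩ := uc_on hball2c L.F_cont ε hε
    set C0 : ℝ := 2 * M1 / wmin with hC0
    have hC00 : 0 < C0 := by positivity
    set εv : ℝ := δF / 2 with hεv
    set εw : ℝ := δF / 4 / C0 with hεw
    set θ : ℝ := δF / 8 / (C0 * wmax) with hθd
    have hεv0 : 0 < εv := by positivity
    have hεw0 : 0 < εw := by positivity
    have hθ0 : 0 < θ := by positivity
    obtain ⟨δv, hδv0, hδv⟩ := uc_on (isCompact_closedBall (0 : Fin d → ℝ) R)
      L.val_cont εv hεv0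
    obtain ⟨δw, hδw0, hδw⟩ := uc_on hs3c L.w_cont εw hεw0
    refine ⟨min (min δv δw) (min δF θ), by positivity, ?_⟩
    set δ := min (min δv δw) (min δF θ) with hδd
    have hδ0 : 0 < δ := by positivity
    intro n x y hx hy j hj hcount
    have hδv' : δ ≤ δv := le_trans (min_le_left _ _) (min_le_left _ _)
    have hδw' : δ ≤ δw := le_trans (min_le_left _ _) (min_le_right _ _)
    have hδF' : δ ≤ δF := le_trans (min_le_right _ _) (min_le_left _ _)
    have hθ' : δ ≤ θ := le_trans (min_le_right _ _) (min_le_right _ _)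
    set s := Finset.Iic j with hsdef
    set B := s.filter (fun i => ¬ ‖x i - y i‖ ≤ δ) with hBdef
    have hgood : ∀ i ∈ s, i ∉ B → ‖x i - y i‖ ≤ δ := by
      intro i hi hiB
      by_contra hcon
      exact hiB (Finset.mem_filter.2 ⟨hi, hcon⟩)
    have hcard : (s.card : ℝ) = (j.val : ℝ) + 1 := by
      rw [hsdef, Fin.card_Iic]; push_cast; ring
    have hBcard : (B.card : ℝ) ≤ θ * s.card := by
      rw [hcard]
      calc (B.card : ℝ) ≤ δ * ((j.val : ℝ) + 1) := hcount
      _ ≤ θ * ((j.val : ℝ) + 1) :=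
          mul_le_mul_of_nonneg_right hθ' (by positivity)
    have hane : s.Nonempty := ⟨j, Finset.mem_Iic.2 le_rfl⟩
    have hgw : ∀ i ∈ s, i ∉ B →
        |L.w (x i) (x j) (L.p i.val j.val) - L.w (y i) (y j) (L.p i.val j.val)| ≤ εw := by
      intro i hi hiB
      have hxy : ‖x i - y i‖ ≤ δ := hgood i hi hiB
      have h1 := htriple (x i) (x j) i.val j.val (hx i) (hx j)
      have h2 := htriple (y i) (y j) i.val j.val (hy i) (hy j)
      have hd : dist ((x i, x j, L.p i.val j.val) :
          (Fin d → ℝ) × ((Fin d → ℝ) × (Fin d → ℝ))) (y i, y j, L.p i.val j.val) ≤ δ := by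
        rw [Prod.dist_eq, Prod.dist_eq, dist_self, dist_eq_norm, dist_eq_norm]
        exact sup_le hxy (sup_le hj hδ0.le)
      have := hδw _ h1 _ h2 (le_trans hd hδw')
      rwa [Real.dist_eq] at this
    have hgv : ∀ i ∈ s, i ∉ B → ‖L.val (x i) - L.val (y i)‖ ≤ εv := by
      intro i hi hiB
      have hxy : ‖x i - y i‖ ≤ δ := hgood i hi hiB
      have := hδv _ (hmemballR R _ (hx i)) _ (hmemballR R _ (hy i))
        (by rw [dist_eq_norm]; exact le_trans hxy hδv')
      rwa [dist_eq_norm] at this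
    have hdiff : ‖L.attn x j - L.attn y j‖ ≤ εv + (2 * M1 / wmin) * (εw + 2 * θ * wmax) := by
      have h := avg_diff (d := d) s hane
        (fun i => L.w (x i) (x j) (L.p i.val j.val))
        (fun i => L.w (y i) (y j) (L.p i.val j.val))
        (fun i => L.val (x i)) (fun i => L.val (y i))
        hwmin0 hM10.le hεw0.le hεv0.le hθ0.le
        (fun i _ => (hwb _ _ _ _ (hx i) (hx j)).1)
        (fun i _ => (hwb _ _ _ _ (hx i) (hx j)).2)
        (fun i _ => (hwb _ _ _ _ (hy i) (hy j)).1)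
        (fun i _ => (hwb _ _ _ _ (hy i) (hy j)).2)
        (fun i _ => hval _ (hx i)) (fun i _ => hval _ (hy i))
        B hgw hgv hBcard
      simpa [AttentionLayer.attn, hsdef] using h
    have harith : εv + (2 * M1 / wmin) * (εw + 2 * θ * wmax) ≤ δF := by
      have e1 : C0 * εw = δF / 4 := by
        rw [hεw]; field_simp
      have e2 : C0 * (2 * θ * wmax) = δF / 4 := by
        rw [hθd]; field_simp; ring
      have e3 : (2 * M1 / wmin) * (εw + 2 * θ * wmax) = C0 * εw + C0 * (2 * θ * wmax) := by
        rw [hC0]; ring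
      rw [e3, e1, e2, hεv]; linarith
    have hfin : dist ((L.attn x j, x j) : (Fin d → ℝ) × (Fin d → ℝ)) (L.attn y j, y j) ≤ δF := by
      rw [Prod.dist_eq, dist_eq_norm, dist_eq_norm]
      exact sup_le (le_trans hdiff harith) (le_trans hj hδF')
    have h1 : ((L.attn x j, x j) : (Fin d → ℝ) × (Fin d → ℝ)) ∈ ball2 :=
      ⟨hmemballR M1 _ (hattn n x hx j), hmemballR R _ (hx j)⟩
    have h2 : ((L.attn y j, y j) : (Fin d → ℝ) × (Fin d → ℝ)) ∈ ball2 :=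
      ⟨hmemballR M1 _ (hattn n y hy j), hmemballR R _ (hy j)⟩
    have hfinal := hδF _ h1 _ h2 hfin
    rw [dist_eq_norm] at hfinal
    simpa [AttentionLayer.apply] using hfinal


lemma card_small_indices {n : ℕ} (t : ℝ) (ht : 0 ≤ t) :
    ((Finset.univ.filter (fun j : Fin n => (j.val : ℝ) + 1 ≤ t)).card : ℝ) ≤ t := by
  classical
  have h : ∀ j ∈ (Finset.univ.filter (fun j : Fin n => (j.val : ℝ) + 1 ≤ t)),
      j.val ∈ Finset.range ⌊t⌋₊ := by
    intro j hj
    rw [Finset.mem_filter] at hj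
    rw [Finset.mem_range]
    have h1 : (j.val + 1 : ℕ) ≤ ⌊t⌋₊ := Nat.le_floor (by push_cast; exact hj.2)
    omega
  have hcard := Finset.card_le_card_of_injOn Fin.val h
    (fun a _ b _ hab => Fin.val_injective hab)
  rw [Finset.card_range] at hcard
  calc ((Finset.univ.filter (fun j : Fin n => (j.val : ℝ) + 1 ≤ t)).card : ℝ)
      ≤ (⌊t⌋₊ : ℝ) := by exact_mod_cast hcard
  _ ≤ t := Nat.floor_le ht

set_option maxHeartbeats 1000000 in
lemma layers_est {d : ℕ} (Ls : List (AttentionLayer d)) (hLs : ∀ L ∈ Ls, L.CompactPE)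
    {R : ℝ} (hR : 0 ≤ R) :
    ∃ R' : ℝ, 0 ≤ R' ∧
      (∀ (n : ℕ) (x : Fin n → (Fin d → ℝ)), (∀ i, ‖x i‖ ≤ R) →
        ∀ j, ‖applyLayers Ls x j‖ ≤ R') ∧
      ∀ ε > 0, ∃ δ > 0, ∀ (n : ℕ) (x y : Fin n → (Fin d → ℝ)),
        (∀ i, ‖x i‖ ≤ R) → (∀ i, ‖y i‖ ≤ R) →
        ((Finset.univ.filter (fun i => ¬ ‖x i - y i‖ ≤ δ)).card : ℝ) ≤ δ * n →
        ((Finset.univ.filter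
            (fun i => ¬ ‖applyLayers Ls x i - applyLayers Ls y i‖ ≤ ε)).card : ℝ) ≤ ε * n ∧
        ∀ j : Fin n, j.val + 1 = n → ‖x j - y j‖ ≤ δ →
          ‖applyLayers Ls x j - applyLayers Ls y j‖ ≤ ε := by
  classical
  induction Ls generalizing R with
  | nil =>
      refine ⟨R, hR, ?_, ?_⟩
      · intro n x hx j
        simpa [applyLayers] using hx j
      · intro ε hε
        refine ⟨ε, hε, ?_⟩
        intro n x y hx hy hcount
        constructor
        · simpa [applyLayers] using hcount
        · intro j hj hxy
          simpa [applyLayers] using hxy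
  | cons L tail ih =>
      have hLcp : L.CompactPE := hLs L List.mem_cons_self
      have htailcp : ∀ L' ∈ tail, L'.CompactPE := fun L' h => hLs L' (List.mem_cons_of_mem _ h)
      obtain ⟨R1, hR1, hbound1, hmod1⟩ := layer_est L hLcp hR
      obtain ⟨R', hR', hbound', hmod'⟩ := ih htailcp hR1
      have happ : ∀ (n : ℕ) (x : Fin n → (Fin d → ℝ)),
          applyLayers (L :: tail) x = applyLayers tail (L.apply x) := by
        intro n x; rfl
      refine ⟨R', hR', ?_, ?_⟩
      · intro n x hx j
        rw [happ]
        exact hbound' n (L.apply x) (fun i => hbound1 n x hx i) j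
      · intro ε hε
        obtain ⟨δt, hδt0, hδt⟩ := hmod' ε hε
        obtain ⟨δL, hδL0, hδL⟩ := hmod1 δt hδt0
        set δ : ℝ := min δL (δt * δL / (1 + δL)) with hδd
        have hδ0 : 0 < δ := by positivity
        have hδ1 : δ ≤ δL := min_le_left _ _
        have hδ2 : δ ≤ δt * δL / (1 + δL) := min_le_right _ _
        refine ⟨δ, hδ0, ?_⟩
        intro n x y hx hy hcount
        set x1 := L.apply x with hx1
        set y1 := L.apply y with hy1
        have hx1b : ∀ i, ‖x1 i‖ ≤ R1 := fun i => hbound1 n x hx i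
        have hy1b : ∀ i, ‖y1 i‖ ≤ R1 := fun i => hbound1 n y hy i
        -- good positions
        have hgoodj : ∀ j : Fin n, ‖x j - y j‖ ≤ δ → δ * n ≤ δL * ((j.val : ℝ) + 1) →
            ‖x1 j - y1 j‖ ≤ δt := by
          intro j hxy hlate
          refine hδL n x y hx hy j (le_trans hxy hδ1) ?_
          have hsub : (Finset.Iic j).filter (fun i => ¬ ‖x i - y i‖ ≤ δL) ⊆
              Finset.univ.filter (fun i => ¬ ‖x i - y i‖ ≤ δ) := by
            intro i hi
            rw [Finset.mem_filter] at hi ⊢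
            refine ⟨Finset.mem_univ _, ?_⟩
            intro hle
            exact hi.2 (le_trans hle hδ1)
          calc (((Finset.Iic j).filter (fun i => ¬ ‖x i - y i‖ ≤ δL)).card : ℝ)
              ≤ ((Finset.univ.filter (fun i => ¬ ‖x i - y i‖ ≤ δ)).card : ℝ) := by
                exact_mod_cast Finset.card_le_card hsub
          _ ≤ δ * n := hcount
          _ ≤ δL * ((j.val : ℝ) + 1) := hlate
        -- count for the next stage
        have hcount1 : ((Finset.univ.filter (fun i => ¬ ‖x1 i - y1 i‖ ≤ δt)).card : ℝ)
            ≤ δt * n := by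
          have hsub : Finset.univ.filter (fun i : Fin n => ¬ ‖x1 i - y1 i‖ ≤ δt) ⊆
              (Finset.univ.filter (fun i : Fin n => ¬ ‖x i - y i‖ ≤ δ)) ∪
              (Finset.univ.filter (fun i : Fin n => (i.val : ℝ) + 1 ≤ δ * n / δL)) := by
            intro i hi
            rw [Finset.mem_filter] at hi
            rw [Finset.mem_union, Finset.mem_filter, Finset.mem_filter]
            by_contra hcon
            push_neg at hcon
            obtain ⟨h1, h2⟩ := hcon
            have hxy : ‖x i - y i‖ ≤ δ := h1 (Finset.mem_univ _)
            have hlt : δ * n / δL < (i.val : ℝ) + 1 := h2 (Finset.mem_univ _)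
            have hlate : δ * n ≤ δL * ((i.val : ℝ) + 1) := by
              rw [div_lt_iff₀ hδL0] at hlt
              linarith [hlt]
            exact hi.2 (hgoodj i hxy hlate)
          have hc2 := card_small_indices (n := n) (δ * n / δL) (by positivity)
          calc ((Finset.univ.filter (fun i => ¬ ‖x1 i - y1 i‖ ≤ δt)).card : ℝ)
              ≤ (((Finset.univ.filter (fun i : Fin n => ¬ ‖x i - y i‖ ≤ δ)) ∪
                 (Finset.univ.filter (fun i : Fin n => (i.val : ℝ) + 1 ≤ δ * n / δL))).card : ℝ) := by
                exact_mod_cast Finset.card_le_card hsub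
          _ ≤ ((Finset.univ.filter (fun i : Fin n => ¬ ‖x i - y i‖ ≤ δ)).card : ℝ) +
              ((Finset.univ.filter (fun i : Fin n => (i.val : ℝ) + 1 ≤ δ * n / δL)).card : ℝ) := by
                exact_mod_cast Finset.card_union_le _ _
          _ ≤ δ * n + δ * n / δL := by linarith [hc2, hcount]
          _ ≤ δt * n := by
              have h3 : δ * (1 + δL) ≤ δt * δL := by
                have := mul_le_mul_of_nonneg_right hδ2 (by positivity : (0:ℝ) ≤ 1 + δL)
                calc δ * (1 + δL) ≤ (δt * δL / (1 + δL)) * (1 + δL) := this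
                _ = δt * δL := by field_simp
              have hn0 : (0:ℝ) ≤ n := Nat.cast_nonneg _
              have h5 : δ / δL ≤ δt - δ := by
                rw [div_le_iff₀ hδL0]
                nlinarith [h3]
              have h4 : δ + δ / δL ≤ δt := by linarith
              have h6 : (δ + δ / δL) * n ≤ δt * n := mul_le_mul_of_nonneg_right h4 hn0
              have h7 : δ * (n:ℝ) + δ * n / δL = (δ + δ / δL) * n := by ring
              linarith [h6, h7]
        have hres := hδt n x1 y1 hx1b hy1b hcount1
        constructor
        · rw [happ]
          exact hres.1
        · intro j hj hxy
          rw [happ]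
          refine hres.2 j hj ?_
          refine hgoodj j hxy ?_
          have : (n : ℝ) = (j.val : ℝ) + 1 := by exact_mod_cast hj.symm
          rw [this]
          exact mul_le_mul_of_nonneg_right hδ1 (by positivity)


lemma card_fin_filter (n : ℕ) (P : ℕ → Prop) [DecidablePred P] :
    (Finset.univ.filter (fun i : Fin n => P i.val)).card
      = ((Finset.range n).filter P).card := by
  rw [Finset.card_filter, Finset.card_filter,
    ← Fin.sum_univ_eq_sum_range (fun k => if P k then 1 else 0) n]

open Classical in
lemma select_position {A : Type*} (α β : ℕ → A) {δ : ℝ} (hδ0 : 0 < δ) (hδ8 : δ ≤ 1/8)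
    (hinf : {n : ℕ | α n ≠ β n}.Infinite)
    (hfreq : ∀ N : ℕ, ∃ n, N ≤ n ∧
      (((Finset.range n).filter (fun k => α (k+1) ≠ β (k+1))).card : ℝ) ≤ 2 * δ * n) :
    ∀ N : ℕ, ∃ m, N ≤ m ∧ 1 ≤ m ∧ α m = β m ∧ α (m+1) ≠ β (m+1) ∧
      (((Finset.range m).filter (fun k => α (k+1) ≠ β (k+1))).card : ℝ) ≤ 4 * δ * m := by
  intro N
  obtain ⟨n, hnN, hdc⟩ := hfreq (2 * N + 2)
  have hn2 : 2 ≤ n := by omega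
  have hnR : (2:ℝ) ≤ (n:ℝ) := by exact_mod_cast hn2
  have hmono : ∀ a b : ℕ, a ≤ b → (∀ k, a < k → k ≤ b → α k = β k) →
      ((Finset.range b).filter (fun k => α (k+1) ≠ β (k+1))).card
        ≤ ((Finset.range a).filter (fun k => α (k+1) ≠ β (k+1))).card := by
    intro a b hab hagree
    apply Finset.card_le_card
    intro k hk
    rw [Finset.mem_filter, Finset.mem_range] at hk ⊢
    refine ⟨?_, hk.2⟩
    by_contra hka
    push_neg at hka
    exact hk.2 (hagree (k+1) (by omega) (by omega))
  by_cases hcase : α n = β n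
  · -- the next difference is beyond n
    obtain ⟨p0, hp0mem, hp0gt⟩ := hinf.exists_gt n
    have hex : ∃ k, n < k ∧ α k ≠ β k := ⟨p0, hp0gt, hp0mem⟩
    set p := Nat.find hex with hpd
    obtain ⟨hpn, hpne⟩ := Nat.find_spec hex
    refine ⟨p - 1, by omega, by omega, ?_, ?_, ?_⟩
    · rcases Nat.lt_or_ge n (p-1) with h | h
      · by_contra hne
        exact (Nat.find_min hex (m := p - 1) (by omega)) ⟨h, hne⟩
      · have he : p - 1 = n := by omega
        rw [he]; exact hcase
    · have he : p - 1 + 1 = p := by omega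
      rw [he]; exact hpne
    · have h1 : ((Finset.range (p-1)).filter (fun k => α (k+1) ≠ β (k+1))).card
          ≤ ((Finset.range n).filter (fun k => α (k+1) ≠ β (k+1))).card := by
        apply hmono n (p-1) (by omega)
        intro k hk1 hk2
        by_contra hne
        exact (Nat.find_min hex (m := k) (by omega)) ⟨hk1, hne⟩
      have h2 : (n : ℝ) ≤ ((p - 1 : ℕ) : ℝ) := by exact_mod_cast (by omega : n ≤ p - 1)
      calc (((Finset.range (p-1)).filter (fun k => α (k+1) ≠ β (k+1))).card : ℝ)
          ≤ (((Finset.range n).filter (fun k => α (k+1) ≠ β (k+1))).card : ℝ) := by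
            exact_mod_cast h1
      _ ≤ 2 * δ * n := hdc
      _ ≤ 4 * δ * ((p - 1 : ℕ) : ℝ) := by nlinarith [hδ0, h2]
  · -- there is a difference at n itself: step back to the last agreement
    have hwit : ∃ k, k ≤ n ∧ (1 ≤ k ∧ α k = β k) := by
      by_contra hno
      push_neg at hno
      have hall : ∀ k < n, α (k+1) ≠ β (k+1) := by
        intro k hk
        exact (hno (k+1) (by omega)) (by omega)
      have heq : (Finset.range n).filter (fun k => α (k+1) ≠ β (k+1)) = Finset.range n := by
        apply Finset.filter_true_of_mem
        intro k hk
        exact hall k (Finset.mem_range.1 hk)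
      rw [heq, Finset.card_range] at hdc
      nlinarith [hdc, hnR, hδ8]
    obtain ⟨k₀, hk₀n, hk₀P⟩ := hwit
    set P : ℕ → Prop := fun k => 1 ≤ k ∧ α k = β k with hPd
    set m := Nat.findGreatest P n with hmd
    have hPm : P m := Nat.findGreatest_spec hk₀n hk₀P
    have hmn : m ≤ n := Nat.findGreatest_le n
    have hmltn : m < n := by
      rcases Nat.lt_or_ge m n with h | h
      · exact h
      · exfalso
        have : m = n := le_antisymm hmn h
        rw [this] at hPm
        exact hcase hPm.2
    have hgt : ∀ k, m < k → k ≤ n → α k ≠ β k := by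
      intro k h1 h2 heq
      exact (Nat.findGreatest_is_greatest h1 h2) ⟨by omega, heq⟩
    -- count lower bound: positions m+1..n all differ
    have hsub : Finset.Ico m n ⊆ (Finset.range n).filter (fun k => α (k+1) ≠ β (k+1)) := by
      intro k hk
      rw [Finset.mem_Ico] at hk
      rw [Finset.mem_filter, Finset.mem_range]
      exact ⟨hk.2, hgt (k+1) (by omega) (by omega)⟩
    have hlow : ((n - m : ℕ) : ℝ)
        ≤ (((Finset.range n).filter (fun k => α (k+1) ≠ β (k+1))).card : ℝ) := by
      have := Finset.card_le_card hsub
      rw [Nat.card_Ico] at this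
      exact_mod_cast this
    have hnm : (n : ℝ) - (m : ℝ) ≤ 2 * δ * n := by
      rw [Nat.cast_sub hmn] at hlow
      linarith [hlow, hdc]
    have hmhalf : (n : ℝ) / 2 ≤ (m : ℝ) := by nlinarith [hnm, hδ8, hnR]
    have hNn : (2 * N + 2 : ℝ) ≤ (n : ℝ) := by exact_mod_cast hnN
    have hNm : (N : ℕ) ≤ m := by
      have : (N : ℝ) ≤ (m : ℝ) := by linarith
      exact_mod_cast this
    refine ⟨m, hNm, hPm.1, hPm.2, hgt (m+1) (by omega) (by omega), ?_⟩
    have hdm : ((Finset.range m).filter (fun k => α (k+1) ≠ β (k+1))).card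
        ≤ ((Finset.range n).filter (fun k => α (k+1) ≠ β (k+1))).card :=
      Finset.card_le_card (Finset.filter_subset_filter _ (Finset.range_subset_range.2 hmn))
    calc (((Finset.range m).filter (fun k => α (k+1) ≠ β (k+1))).card : ℝ)
        ≤ (((Finset.range n).filter (fun k => α (k+1) ≠ β (k+1))).card : ℝ) := by
          exact_mod_cast hdm
    _ ≤ 2 * δ * n := hdc
    _ ≤ 4 * δ * m := by nlinarith [hmhalf, hδ0]


set_option maxHeartbeats 1000000 in
/-- If a set `S` of infinite sequences has a point `α ∈ S` such that arbitrarily close to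
`α` in `d_H`-distance there is a sequence of `S` differing from `α` in infinitely many
positions, then no compact decoder-only Transformer eventually learns all of `S`. -/
theorem no_transformer_learns_accumulating_family {A : Type*} [Fintype A]
    (zero one : A) (h01 : zero ≠ one) (S : Set (ℕ → A))
    (hS : ∃ α ∈ S, ∀ δ : ℝ, 0 < δ → ∃ β ∈ S,
      {n : ℕ | α n ≠ β n}.Infinite ∧ relHammingInf α β ≤ δ) :
    ¬ ∃ (d : ℕ) (T : Transformer A d), T.IsCompactT ∧
      ∀ γ ∈ S, EventuallyLearns T γ := by
  classical
  rintro ⟨d, T, ⟨⟨Ke, hKec, hKe⟩, hLcp⟩, hlearn⟩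
  obtain ⟨α, hαS, hacc⟩ := hS
  obtain ⟨r, hr⟩ := hKec.isBounded.subset_closedBall 0
  set R : ℝ := max r 0 with hRd
  have hR0 : 0 ≤ R := le_max_right _ _
  have hemb : ∀ (a : A) (i : ℕ), ‖T.embed a i‖ ≤ R := by
    intro a i
    have := hr (hKe a i)
    rw [Metric.mem_closedBall, dist_zero_right] at this
    exact le_trans this (le_max_left _ _)
  obtain ⟨R', hR'0, hbound, hmod⟩ := layers_est T.layers hLcp hR0
  obtain ⟨εα, hεα0, n₀α, hlα⟩ := hlearn α hαS
  obtain ⟨δP, hδP0, hδP⟩ := uc_on (isCompact_closedBall (0 : Fin d → ℝ) R')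
    T.proj_cont (εα/2) (by linarith)
  obtain ⟨δ1, hδ10, hδ1⟩ := hmod δP hδP0
  set δ0 : ℝ := min (δ1/4) (1/8) with hδ0d
  have hδ00 : 0 < δ0 := by positivity
  have hδ08 : δ0 ≤ 1/8 := min_le_right _ _
  have hδ04 : 4 * δ0 ≤ δ1 := by
    have := min_le_left (δ1/4) (1/8)
    rw [hδ0d]; linarith [this]
  obtain ⟨β, hβS, hβinf, hβH⟩ := hacc δ0 hδ00
  obtain ⟨εβ, hεβ0, n₀β, hlβ⟩ := hlearn β hβS
  -- the relative Hamming distance of prefixes, as a ratio of counts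
  have hrel : ∀ n : ℕ, relHamming (fun i : Fin n => α (i.val+1)) (fun i : Fin n => β (i.val+1))
      = (((Finset.range n).filter (fun k => α (k+1) ≠ β (k+1))).card : ℝ) / n := by
    intro n
    rw [relHamming]
    congr 2
    exact card_fin_filter n (fun k => α (k+1) ≠ β (k+1))
  have hf1 : ∀ n : ℕ, relHamming (fun i : Fin n => α (i.val+1))
      (fun i : Fin n => β (i.val+1)) ≤ 1 := by
    intro n
    rw [hrel]
    rcases Nat.eq_zero_or_pos n with h | h
    · subst h; simp
    · rw [div_le_one (by exact_mod_cast h)]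
      have := Finset.card_filter_le (Finset.range n) (fun k => α (k+1) ≠ β (k+1))
      rw [Finset.card_range] at this
      exact_mod_cast this
  have hcob : Filter.IsCoboundedUnder (· ≥ ·) Filter.atTop
      (fun n : ℕ => relHamming (fun i : Fin n => α (i.val+1)) (fun i : Fin n => β (i.val+1))) :=
    Filter.IsBoundedUnder.isCoboundedUnder_ge (Filter.isBoundedUnder_of ⟨1, hf1⟩)
  have hlim : relHammingInf α β < 2 * δ0 := lt_of_le_of_lt hβH (by linarith)
  have hfreq0 := Filter.frequently_lt_of_liminf_lt hcob hlim
  have hfreq : ∀ N : ℕ, ∃ n, N ≤ n ∧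
      (((Finset.range n).filter (fun k => α (k+1) ≠ β (k+1))).card : ℝ) ≤ 2 * δ0 * n := by
    intro N
    obtain ⟨n, hnN, hn⟩ := (Filter.frequently_atTop.1 hfreq0) (max N 1)
    refine ⟨n, le_trans (le_max_left _ _) hnN, ?_⟩
    have hn1 : 1 ≤ n := le_trans (le_max_right _ _) hnN
    rw [hrel] at hn
    have hnpos : (0:ℝ) < n := by exact_mod_cast hn1
    rw [div_lt_iff₀ hnpos] at hn
    linarith
  obtain ⟨m, hmN, hm1, hmeq, hmne, hmcount⟩ :=
    select_position α β hδ00 hδ08 hβinf hfreq (max n₀α n₀β + 1)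
  obtain ⟨n, rfl⟩ : ∃ n, m = n + 1 := ⟨m - 1, by omega⟩
  set x : Fin (n+1) → (Fin d → ℝ) := fun i => T.embed (α (i.val + 1)) i.val with hxd
  set y : Fin (n+1) → (Fin d → ℝ) := fun i => T.embed (β (i.val + 1)) i.val with hyd
  have hxb : ∀ i, ‖x i‖ ≤ R := fun i => hemb _ _
  have hyb : ∀ i, ‖y i‖ ≤ R := fun i => hemb _ _
  have hcount : ((Finset.univ.filter (fun i : Fin (n+1) => ¬ ‖x i - y i‖ ≤ δ1)).card : ℝ)
      ≤ δ1 * (n+1) := by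
    have hsub : Finset.univ.filter (fun i : Fin (n+1) => ¬ ‖x i - y i‖ ≤ δ1) ⊆
        Finset.univ.filter (fun i : Fin (n+1) => α (i.val+1) ≠ β (i.val+1)) := by
      intro i hi
      rw [Finset.mem_filter] at hi ⊢
      refine ⟨Finset.mem_univ _, ?_⟩
      intro heq
      apply hi.2
      show ‖T.embed (α (i.val + 1)) i.val - T.embed (β (i.val + 1)) i.val‖ ≤ δ1
      rw [heq, sub_self, norm_zero]
      exact hδ10.le
    have hcard := card_fin_filter (n+1) (fun k => α (k+1) ≠ β (k+1))
    have hcast : (((n:ℕ)+1 : ℕ) : ℝ) = (n:ℝ) + 1 := by push_cast; ring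
    calc ((Finset.univ.filter (fun i : Fin (n+1) => ¬ ‖x i - y i‖ ≤ δ1)).card : ℝ)
        ≤ ((Finset.univ.filter
            (fun i : Fin (n+1) => α (i.val+1) ≠ β (i.val+1))).card : ℝ) := by
          exact_mod_cast Finset.card_le_card hsub
    _ = (((Finset.range (n+1)).filter (fun k => α (k+1) ≠ β (k+1))).card : ℝ) := by
          exact_mod_cast hcard
    _ ≤ 4 * δ0 * ((n:ℝ) + 1) := by
          have := hmcount
          rwa [hcast] at this
    _ ≤ δ1 * ((n:ℝ)+1) := by
          have hp : (0:ℝ) ≤ (n:ℝ) + 1 := by positivity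
          exact mul_le_mul_of_nonneg_right hδ04 hp
  have hlast : ‖x (Fin.last n) - y (Fin.last n)‖ ≤ δ1 := by
    show ‖T.embed (α ((Fin.last n).val + 1)) (Fin.last n).val
      - T.embed (β ((Fin.last n).val + 1)) (Fin.last n).val‖ ≤ δ1
    rw [Fin.val_last]
    rw [hmeq, sub_self, norm_zero]
    exact hδ10.le
  have hres := hδ1 (n+1) x y hxb hyb (by exact_mod_cast hcount)
  have hout : ‖applyLayers T.layers x (Fin.last n) - applyLayers T.layers y (Fin.last n)‖ ≤ δP := by
    refine hres.2 (Fin.last n) ?_ hlast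
    simp [Fin.val_last]
  -- closeness of output distributions
  have hu : applyLayers T.layers x (Fin.last n) ∈ Metric.closedBall (0 : Fin d → ℝ) R' := by
    rw [Metric.mem_closedBall, dist_zero_right]
    exact hbound (n+1) x hxb (Fin.last n)
  have hv : applyLayers T.layers y (Fin.last n) ∈ Metric.closedBall (0 : Fin d → ℝ) R' := by
    rw [Metric.mem_closedBall, dist_zero_right]
    exact hbound (n+1) y hyb (Fin.last n)
  have hclose := hδP _ hu _ hv (by rw [dist_eq_norm]; exact hout)
  have hevalα : T.eval (fun i : Fin (n+1) => α (i.val+1))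
      = T.proj (applyLayers T.layers x (Fin.last n)) := rfl
  have hevalβ : T.eval (fun i : Fin (n+1) => β (i.val+1))
      = T.proj (applyLayers T.layers y (Fin.last n)) := rfl
  have hoε : ∀ σ : A, |T.eval (fun i : Fin (n+1) => α (i.val+1)) σ
      - T.eval (fun i : Fin (n+1) => β (i.val+1)) σ| ≤ εα/2 := by
    intro σ
    rw [hevalα, hevalβ, ← Real.dist_eq]
    exact le_trans (dist_le_pi_dist _ _ σ) hclose
  -- the learning inequalities
  have hnα : n ≥ n₀α := by
    have := le_max_left n₀α n₀β
    omega
  have hnβ : n ≥ n₀β := by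
    have := le_max_right n₀α n₀β
    omega
  have hmne' : α (n+2) ≠ β (n+2) := hmne
  have h1 := hlα n hnα (β (n+2)) (Ne.symm hmne')
  have h2 := hlβ n hnβ (α (n+2)) hmne'
  have ha := abs_le.1 (hoε (α (n+2)))
  have hb := abs_le.1 (hoε (β (n+2)))
  linarith [h1, h2, ha.1, ha.2, hb.1, hb.2, hεβ0]
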